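/- Let L be a number field of degree g = [L:ℚ] with ring of integers O_L, let h = |Pic(O_L)| be the class number of L, and let Γ be an order of L with conductor f. Then the cardinality of the set C_Γ of equivalence classes of fractional ideals of Γ satisfies |C_Γ| ≤ N(f)^{g+1} · h. -/

import Mathlib

open NumberField
open scoped nonZeroDivisors Pointwise

def orderConductor (L : Type*) [Field L] (Γ : Subring L) : Ideal (𝓞 L) where
  carrier := {x : 𝓞 L | ∀ y : 𝓞 L, algebraMap (𝓞 L) L (x * y) ∈ Γ}
  add_mem' := by
    intro a b ha hb y
    have : (a + b) * y = a * y + b * y := add_mul a b y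
    rw [this, map_add]
    exact Γ.add_mem (ha y) (hb y)
  zero_mem' := by
    intro y
    rw [zero_mul, map_zero]
    exact Γ.zero_mem
  smul_mem' := by
    intro c x hx y
    have : c • x * y = x * (c * y) := by rw [smul_eq_mul]; ring
    rw [this]
    exact hx (c * y)

def FractionalIdealOf (L : Type*) [Field L] (Γ : Subring L) : Type _ :=
  {I : Submodule Γ L // I ≠ ⊥ ∧ I.FG}

def FracIdealRel (L : Type*) [Field L] (Γ : Subring L)
    (I I' : FractionalIdealOf L Γ) : Prop :=
  ∃ x : L, x ≠ 0 ∧ ∀ y : L, y ∈ I'.1 ↔ ∃ z ∈ I.1, y = x * z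

section Aux

set_option linter.unusedSectionVars false

variable {L : Type*} [Field L] [NumberField L] {Γ : Subring L}

/-- Multiplication by `x : L` as a `Γ`-linear endomorphism of `L`. -/
def mulL (Γ : Subring L) (x : L) : L →ₗ[Γ] L where
  toFun y := x * y
  map_add' := mul_add x
  map_smul' := by intro γ y; show x * (↑γ * y) = ↑γ * (x * y); ring

lemma mem_mulL_map (x : L) (I : Submodule Γ L) (y : L) :
    y ∈ I.map (mulL Γ x) ↔ ∃ z ∈ I, y = x * z := by
  simp only [Submodule.mem_map]
  constructor
  · rintro ⟨z, hz, rfl⟩; exact ⟨z, hz, rfl⟩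
  · rintro ⟨z, hz, rfl⟩; exact ⟨z, hz, rfl⟩

lemma rel_mulL_map (x : L) (hx : x ≠ 0) (I : FractionalIdealOf L Γ)
    (I' : FractionalIdealOf L Γ) (hI' : I'.1 = I.1.map (mulL Γ x)) :
    FracIdealRel L Γ I I' := by
  refine ⟨x, hx, fun y => ?_⟩
  rw [hI', mem_mulL_map]

lemma mulL_map_ne_bot (x : L) (hx : x ≠ 0) (I : Submodule Γ L) (hI : I ≠ ⊥) :
    I.map (mulL Γ x) ≠ ⊥ := by
  obtain ⟨z, hz, hz0⟩ := Submodule.exists_mem_ne_zero_of_ne_bot hI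
  exact Submodule.ne_bot_iff _ |>.mpr
    ⟨x * z, (mem_mulL_map x I _).mpr ⟨z, hz, rfl⟩, mul_ne_zero hx hz0⟩

lemma coe_mem_integers (hΓfin : Module.Finite ℤ Γ) {x : L} (hx : x ∈ Γ) :
    ∃ r : 𝓞 L, algebraMap (𝓞 L) L r = x :=
  ⟨⟨x, (IsIntegral.of_finite ℤ (⟨x, hx⟩ : Γ)).map Γ.subtype.toIntAlgHom⟩, rfl⟩

lemma span_subset_integers (hΓfin : Module.Finite ℤ Γ) {X : Set L}
    (hX : X ⊆ Set.range (algebraMap (𝓞 L) L)) :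
    (Submodule.span Γ X : Set L) ⊆ Set.range (algebraMap (𝓞 L) L) := by
  intro z hz
  induction hz using Submodule.span_induction with
  | mem z hz => exact hX hz
  | zero => exact ⟨0, map_zero _⟩
  | add a b _ _ ha hb =>
      obtain ⟨r, hr⟩ := ha; obtain ⟨s, hs⟩ := hb
      exact ⟨r + s, by rw [map_add, hr, hs]⟩
  | smul γ a _ ha =>
      obtain ⟨r, hr⟩ := ha
      obtain ⟨s, hs⟩ := coe_mem_integers hΓfin γ.2
      exact ⟨s * r, by rw [map_mul, hr, hs]; rfl⟩

lemma exists_int_smul_mem (hΓspan : Submodule.span ℚ (Γ : Set L) = ⊤) (x : L) :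
    ∃ n : ℤ, n ≠ 0 ∧ (n : L) * x ∈ Γ := by
  have hx : x ∈ Submodule.span ℚ (Γ : Set L) := by rw [hΓspan]; trivial
  induction hx using Submodule.span_induction with
  | mem z hz => exact ⟨1, one_ne_zero, by simpa using hz⟩
  | zero => exact ⟨1, one_ne_zero, by simpa using Γ.zero_mem⟩
  | add a b _ _ ha hb =>
      obtain ⟨n, hn, hna⟩ := ha; obtain ⟨m, hm, hmb⟩ := hb
      refine ⟨n * m, mul_ne_zero hn hm, ?_⟩
      have h1 : ((n * m : ℤ) : L) * (a + b) = (m : L) * ((n:L)*a) + (n:L)*((m:L)*b) := by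
        push_cast; ring
      rw [h1]
      exact Γ.add_mem (Γ.mul_mem (intCast_mem Γ m) hna) (Γ.mul_mem (intCast_mem Γ n) hmb)
  | smul q a _ ha =>
      obtain ⟨n, hn, hna⟩ := ha
      refine ⟨n * q.den, mul_ne_zero hn (by exact_mod_cast q.den_nz), ?_⟩
      have hden : ((q.den : ℤ) : L) ≠ 0 := by
        exact_mod_cast (Nat.cast_ne_zero (R := L)).mpr q.den_nz
      have h1 : ((n * (q.den:ℤ) : ℤ) : L) * (q • a) = (q.num : L) * ((n:L) * a) := by
        rw [Rat.smul_def, Rat.cast_def]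
        push_cast at hden ⊢
        field_simp
      rw [h1]
      exact Γ.mul_mem (intCast_mem Γ q.num) hna

lemma orderConductor_ne_bot (hΓspan : Submodule.span ℚ (Γ : Set L) = ⊤) :
    orderConductor L Γ ≠ ⊥ := by
  obtain ⟨s, hs⟩ := Module.Finite.fg_top (R := ℤ) (M := 𝓞 L)
  choose nf hnf0 hnf using fun e : 𝓞 L => exists_int_smul_mem hΓspan (algebraMap (𝓞 L) L e)
  set n : ℤ := ∏ e ∈ s, nf e with hn
  have hn0 : n ≠ 0 := Finset.prod_ne_zero_iff.mpr fun e _ => hnf0 e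
  have key : ∀ y : 𝓞 L, algebraMap (𝓞 L) L ((n : 𝓞 L) * y) ∈ Γ := by
    intro y
    have hy : y ∈ (⊤ : Submodule ℤ (𝓞 L)) := trivial
    rw [← hs] at hy
    induction hy using Submodule.span_induction with
    | mem e he =>
        obtain ⟨m, hme⟩ : ∃ m : ℤ, n = nf e * m :=
          Finset.dvd_prod_of_mem nf (Finset.mem_coe.mp he)
        rw [hme]
        have : algebraMap (𝓞 L) L (((nf e * m : ℤ) : 𝓞 L) * e)
            = (m : L) * ((nf e : L) * algebraMap (𝓞 L) L e) := by
          push_cast [map_mul, map_intCast]; ring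
        rw [this]
        exact Γ.mul_mem (intCast_mem Γ m) (hnf e)
    | zero => rw [mul_zero, map_zero]; exact Γ.zero_mem
    | add a b _ _ ha hb => rw [mul_add, map_add]; exact Γ.add_mem ha hb
    | smul m a _ ha =>
        have : (n : 𝓞 L) * (m • a) = (m : 𝓞 L) * ((n : 𝓞 L) * a) := by
          rw [zsmul_eq_mul]; ring
        rw [this, map_mul, map_intCast]
        exact Γ.mul_mem (intCast_mem Γ m) ha
  intro hbot
  have : (n : 𝓞 L) ∈ orderConductor L Γ := key
  rw [hbot, Ideal.mem_bot] at this
  exact hn0 (by exact_mod_cast this)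

lemma conductor_smul_span_mem (hΓfin : Module.Finite ℤ Γ) (I : Submodule Γ L)
    {z : L} (hz : z ∈ Submodule.span (𝓞 L) (I : Set L)) :
    ∀ a ∈ orderConductor L Γ, algebraMap (𝓞 L) L a * z ∈ I := by
  induction hz using Submodule.span_induction with
  | mem z hzI =>
      intro a ha
      have hmem : algebraMap (𝓞 L) L a ∈ Γ := by simpa using ha 1
      exact I.smul_mem (⟨algebraMap (𝓞 L) L a, hmem⟩ : Γ) hzI
  | zero => intro a _; rw [mul_zero]; exact I.zero_mem
  | add x y _ _ hx hy => intro a ha; rw [mul_add]; exact I.add_mem (hx a ha) (hy a ha)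
  | smul r x _ hx =>
      intro a ha
      have : algebraMap (𝓞 L) L a * (r • x) = algebraMap (𝓞 L) L (a * r) * x := by
        rw [map_mul]
        show _ * (algebraMap (𝓞 L) L r * x) = _
        ring
      rw [this]
      exact hx (a * r) (Ideal.mul_mem_right r _ ha)

lemma intSpan_le (X : Set L) :
    Submodule.span ℤ X ≤ (Submodule.span Γ X).restrictScalars ℤ :=
  Submodule.span_le.mpr Submodule.subset_span

end Aux

/-- Let `L` be a number field of degree `g = [L:ℚ]` with ring of
integers `O_L`, let `h = |Pic(O_L)|` be the class number of `L`, and let `Γ` be an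
order of `L` with conductor `f`.  Then the set `C_Γ` of equivalence classes of
fractional ideals of `Γ` satisfies `|C_Γ| ≤ N(f)^{g+1} · h`. -/
theorem card_fracIdealClasses_le
    (L : Type*) [Field L] [NumberField L]
    (g : ℕ) (hg : g = Module.finrank ℚ L)
    (Γ : Subring L) (hΓfin : Module.Finite ℤ Γ)
    (hΓspan : Submodule.span ℚ (Γ : Set L) = ⊤) :
    Nat.card (Quot (FracIdealRel L Γ)) ≤
      (Nat.card (𝓞 L ⧸ orderConductor L Γ)) ^ (g + 1) *
        Nat.card (ClassGroup (𝓞 L)) := by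
  classical
  set f := orderConductor L Γ with hfdef
  have hfne : f ≠ ⊥ := orderConductor_ne_bot hΓspan
  obtain ⟨rep, hrep⟩ : ∃ rep : ClassGroup (𝓞 L) → (Ideal (𝓞 L))⁰,
      ∀ c, ClassGroup.mk0 (rep c) = c :=
    ⟨fun c => (ClassGroup.mk0_surjective c).choose,
     fun c => (ClassGroup.mk0_surjective c).choose_spec⟩
  -- the finite quotient types
  let Q : ClassGroup (𝓞 L) → Type _ := fun c =>
    ↥((rep c : Ideal (𝓞 L)).toAddSubgroup) ⧸
      ((f * (rep c : Ideal (𝓞 L))).toAddSubgroup.addSubgroupOf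
        (rep c : Ideal (𝓞 L)).toAddSubgroup)
  -- finite ℤ-generating sets of f * rep c
  choose T hT using fun c : ClassGroup (𝓞 L) =>
    (IsNoetherian.noetherian ((f * (rep c : Ideal (𝓞 L))).restrictScalars ℤ) :
      ((f * (rep c : Ideal (𝓞 L))).restrictScalars ℤ).FG)
  have hfJne : ∀ c, f * (rep c : Ideal (𝓞 L)) ≠ ⊥ := by
    intro c
    rw [Ne, Ideal.mul_eq_bot]
    push_neg
    refine ⟨hfne, ?_⟩
    have := nonZeroDivisors.coe_ne_zero (rep c)
    simpa using this
  -- the generating sets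
  let gens : ∀ c : ClassGroup (𝓞 L), (Fin g → Q c) → Set L := fun c v =>
    (algebraMap (𝓞 L) L '' (T c : Set (𝓞 L))) ∪
      (Set.range fun i => algebraMap (𝓞 L) L ((v i).out : 𝓞 L))
  have hKey : ∀ c (v : Fin g → Q c),
      Submodule.span Γ (gens c v) ≠ ⊥ ∧ (Submodule.span Γ (gens c v)).FG := by
    intro c v
    constructor
    · obtain ⟨a, ha, ha0⟩ := Submodule.exists_mem_ne_zero_of_ne_bot (hfJne c)
      have haT : a ∈ Submodule.span ℤ (T c : Set (𝓞 L)) := by rw [hT c]; exact ha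
      have h2 : algebraMap (𝓞 L) L a ∈
          Submodule.map ((Algebra.linearMap (𝓞 L) L).restrictScalars ℤ)
            (Submodule.span ℤ (T c : Set (𝓞 L))) := ⟨a, haT, rfl⟩
      rw [Submodule.map_span] at h2
      have h3 : algebraMap (𝓞 L) L a ∈ Submodule.span Γ (gens c v) := by
        refine intSpan_le _ (Submodule.span_mono ?_ h2)
        intro y hy
        exact Or.inl hy
      refine (Submodule.ne_bot_iff _).mpr ⟨algebraMap (𝓞 L) L a, h3, ?_⟩
      simpa using (map_ne_zero_iff _ RingOfIntegers.coe_injective).mpr ha0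
    · exact Submodule.fg_span (((T c).finite_toSet.image _).union (Set.finite_range _))
  let G : (Σ c : ClassGroup (𝓞 L), (Fin g → Q c)) → Quot (FracIdealRel L Γ) := fun p =>
    Quot.mk _ ⟨Submodule.span Γ (gens p.1 p.2), (hKey p.1 p.2).1, (hKey p.1 p.2).2⟩
  have hsurj : Function.Surjective G := by
    rintro q
    obtain ⟨⟨I₀, hI₀ne, hI₀fg⟩, hq⟩ := q.exists_rep
    -- Step 1: scale into the integers
    obtain ⟨T₀, hT₀⟩ := id hI₀fg
    obtain ⟨b, hb⟩ := IsLocalization.exist_integer_multiples_of_finset (𝓞 L)⁰ (S := L) T₀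
    set x₁ : L := algebraMap (𝓞 L) L (b : 𝓞 L) with hx₁def
    have hx₁ : x₁ ≠ 0 := by
      simpa [hx₁def] using
        (map_ne_zero_iff _ RingOfIntegers.coe_injective).mpr (nonZeroDivisors.coe_ne_zero b)
    set I₁ := I₀.map (mulL Γ x₁) with hI₁def
    have hI₁ne : I₁ ≠ ⊥ := mulL_map_ne_bot x₁ hx₁ I₀ hI₀ne
    have hI₁fg : I₁.FG := hI₀fg.map _
    have hI₁int : (I₁ : Set L) ⊆ Set.range (algebraMap (𝓞 L) L) := by
      rw [hI₁def, ← hT₀, Submodule.map_span]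
      refine span_subset_integers hΓfin ?_
      rintro y ⟨t, ht, rfl⟩
      obtain ⟨r, hr⟩ := hb t (Finset.mem_coe.mp ht)
      refine ⟨r, ?_⟩
      rw [hr, Algebra.smul_def]
      rfl
    -- Step 2: the ideal generated by `I₁`
    set J₁ℓ := Submodule.span (𝓞 L) (I₁ : Set L) with hJ₁ℓdef
    have hJ₁range : J₁ℓ ≤ LinearMap.range (Algebra.linearMap (𝓞 L) L) := by
      rw [hJ₁ℓdef, Submodule.span_le]
      intro z hz
      obtain ⟨r, hr⟩ := hI₁int hz
      exact ⟨r, hr⟩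
    set J₁ : Ideal (𝓞 L) := Submodule.comap (Algebra.linearMap (𝓞 L) L) J₁ℓ with hJ₁def
    have hJ₁map : IsLocalization.coeSubmodule L J₁ = J₁ℓ :=
      Submodule.map_comap_eq_self hJ₁range
    have hJ₁ne : J₁ ≠ ⊥ := by
      intro h
      obtain ⟨z, hz, hz0⟩ := Submodule.exists_mem_ne_zero_of_ne_bot hI₁ne
      have hzJ : z ∈ J₁ℓ := Submodule.subset_span hz
      rw [← hJ₁map, h] at hzJ
      simp only [IsLocalization.coeSubmodule, Submodule.map_bot, Submodule.mem_bot] at hzJ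
      exact hz0 hzJ
    set c := ClassGroup.mk0 ⟨J₁, mem_nonZeroDivisors_iff_ne_zero.mpr hJ₁ne⟩ with hcdef
    have hmk : ClassGroup.mk0 (⟨J₁, mem_nonZeroDivisors_iff_ne_zero.mpr hJ₁ne⟩ : (Ideal (𝓞 L))⁰)
        = ClassGroup.mk0 (rep c) := by rw [hrep]
    rw [ClassGroup.mk0_eq_mk0_iff_exists_fraction_ring (K := L)] at hmk
    obtain ⟨x, hx0, hxeq⟩ := hmk
    have hxsub : x • IsLocalization.coeSubmodule L J₁
        = IsLocalization.coeSubmodule L (rep c : Ideal (𝓞 L)) := by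
      have h1 := congrArg (fun I : FractionalIdeal (𝓞 L)⁰ L => (I : Submodule (𝓞 L) L)) hxeq
      simpa [FractionalIdeal.coe_mul, FractionalIdeal.coe_spanSingleton,
        FractionalIdeal.coe_coeIdeal, Submodule.span_singleton_mul] using h1
    -- Step 3: scale so that the 𝓞 L-span is the chosen representative
    set I₂ := I₁.map (mulL Γ x) with hI₂def
    have hI₂ne : I₂ ≠ ⊥ := mulL_map_ne_bot x hx0 I₁ hI₁ne
    have hI₂fg : I₂.FG := hI₁fg.map _
    have hI₂span : Submodule.span (𝓞 L) (I₂ : Set L)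
        = IsLocalization.coeSubmodule L (rep c : Ideal (𝓞 L)) := by
      rw [← hxsub, hJ₁map, hI₂def]
      have h1 : ((I₁.map (mulL Γ x) : Submodule Γ L) : Set L) = x • (I₁ : Set L) := by
        ext y
        simp only [SetLike.mem_coe, mem_mulL_map, Set.mem_smul_set, smul_eq_mul]
        constructor
        · rintro ⟨z, hz, rfl⟩; exact ⟨z, hz, rfl⟩
        · rintro ⟨z, hz, rfl⟩; exact ⟨z, hz, rfl⟩
      rw [h1, ← Submodule.smul_span, hJ₁ℓdef]
    have hI₂sub : (I₂ : Set L) ⊆ (IsLocalization.coeSubmodule L (rep c : Ideal (𝓞 L)) : Set L) := by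
      rw [← hI₂span]
      exact Submodule.subset_span
    -- absorption: f * (rep c) maps into I₂
    have hfabs : ∀ t ∈ f * (rep c : Ideal (𝓞 L)), algebraMap (𝓞 L) L t ∈ I₂ := by
      intro t ht
      refine Submodule.mul_induction_on ht ?_ ?_
      · intro a ha r hr
        rw [map_mul]
        refine conductor_smul_span_mem hΓfin I₂ ?_ a ha
        rw [hI₂span]
        exact (IsLocalization.mem_coeSubmodule L _).mpr ⟨r, hr, rfl⟩
      · intro u u' hu hu'
        rw [map_add]
        exact I₂.add_mem hu hu'
    -- Step 4: ℤ-generators of I₂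
    set φ : (𝓞 L) →ₗ[ℤ] L := (Algebra.linearMap (𝓞 L) L).restrictScalars ℤ with hφdef
    have hI₂int : (I₂ : Set L) ⊆ Set.range (algebraMap (𝓞 L) L) := by
      intro z hz
      obtain ⟨y, _, hy2⟩ := (IsLocalization.mem_coeSubmodule L _).mp (hI₂sub hz)
      exact ⟨y, hy2⟩
    set Nsub : Submodule ℤ (𝓞 L) := Submodule.comap φ (I₂.restrictScalars ℤ) with hNsubdef
    have hNrange : I₂.restrictScalars ℤ ≤ LinearMap.range φ := by
      intro z hz
      obtain ⟨r, hr⟩ := hI₂int hz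
      exact ⟨r, hr⟩
    have hNmap : Submodule.map φ Nsub = I₂.restrictScalars ℤ :=
      Submodule.map_comap_eq_self hNrange
    have hcard : Fintype.card (Module.Free.ChooseBasisIndex ℤ (𝓞 L)) = g := by
      rw [← Module.finrank_eq_card_basis (RingOfIntegers.basis L), RingOfIntegers.rank, hg]
    let bR : Module.Basis (Fin g) ℤ (𝓞 L) :=
      (RingOfIntegers.basis L).reindex (Fintype.equivFinOfCardEq hcard)
    obtain ⟨m, bN⟩ := Submodule.basisOfPid bR Nsub
    have hm : m ≤ g := by
      have h1 : Module.finrank ℤ Nsub = m := by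
        rw [Module.finrank_eq_card_basis bN, Fintype.card_fin]
      have h2 := Submodule.finrank_le Nsub
      rwa [h1, Module.finrank_eq_card_basis bR, Fintype.card_fin] at h2
    set w : Fin g → (𝓞 L) := fun i => if h : (i : ℕ) < m then (bN ⟨i, h⟩ : 𝓞 L) else 0 with hwdef
    have hwN : ∀ i, w i ∈ Nsub := by
      intro i
      rw [hwdef]
      dsimp only
      split
      · exact (bN _).2
      · exact Nsub.zero_mem
    have hNle : Nsub ≤ Submodule.span ℤ (Set.range w) := by
      intro z hz
      have h1 : (⟨z, hz⟩ : Nsub) ∈ (⊤ : Submodule ℤ Nsub) := trivial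
      rw [← bN.span_eq] at h1
      have h3 : z ∈ Submodule.map Nsub.subtype (Submodule.span ℤ (Set.range bN)) :=
        ⟨_, h1, rfl⟩
      rw [Submodule.map_span] at h3
      refine Submodule.span_mono ?_ h3
      rintro y ⟨u, ⟨j, rfl⟩, rfl⟩
      refine ⟨⟨(j : ℕ), lt_of_lt_of_le j.2 hm⟩, ?_⟩
      rw [hwdef]
      dsimp only
      rw [dif_pos j.2]
      rfl
    have hwI₂ : ∀ i, algebraMap (𝓞 L) L (w i) ∈ I₂ := fun i => hwN i
    have hwJ : ∀ i, w i ∈ (rep c : Ideal (𝓞 L)) := by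
      intro i
      obtain ⟨y, hy, hy2⟩ := (IsLocalization.mem_coeSubmodule L _).mp (hI₂sub (hwI₂ i))
      rwa [← RingOfIntegers.coe_injective hy2]
    set v : Fin g → Q c := fun i => QuotientAddGroup.mk ⟨w i, hwJ i⟩ with hvdef
    -- the out-lifts differ from w by elements of f * rep c
    have hδ : ∀ i, ((v i).out : 𝓞 L) - w i ∈ f * (rep c : Ideal (𝓞 L)) := by
      intro i
      have h0 : (QuotientAddGroup.mk ((v i).out) : Q c) = v i := (v i).out_eq
      have h1 : (QuotientAddGroup.mk ((v i).out) : Q c)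
          = QuotientAddGroup.mk (⟨w i, hwJ i⟩ : (rep c : Ideal (𝓞 L)).toAddSubgroup) := by
        rw [h0, hvdef]
      rw [QuotientAddGroup.eq, AddSubgroup.mem_addSubgroupOf] at h1
      have h2 : (-((v i).out : 𝓞 L) + w i) ∈ f * (rep c : Ideal (𝓞 L)) := h1
      have h3 := neg_mem h2
      rw [neg_add_rev, neg_neg] at h3
      rw [sub_eq_add_neg, add_comm]
      exact h3
    have hδI₂ : ∀ i, algebraMap (𝓞 L) L ((v i).out : 𝓞 L) ∈ I₂ := by
      intro i
      have h1 : ((v i).out : 𝓞 L) = w i + (((v i).out : 𝓞 L) - w i) := by ring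
      rw [h1, map_add]
      exact I₂.add_mem (hwI₂ i) (hfabs _ (hδ i))
    -- main span equality
    have hspan2 : Submodule.span Γ (gens c v) = I₂ := by
      apply le_antisymm
      · rw [Submodule.span_le]
        rintro y (⟨t, ht, rfl⟩ | ⟨i, rfl⟩)
        · refine hfabs t ?_
          have h1 : t ∈ Submodule.span ℤ (T c : Set (𝓞 L)) := Submodule.subset_span ht
          rw [hT c] at h1
          exact h1
        · exact hδI₂ i
      · intro z hz
        have hz' : z ∈ Submodule.map φ Nsub := by rw [hNmap]; exact hz
        obtain ⟨n, hn, rfl⟩ := hz'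
        have hn2 : n ∈ Submodule.span ℤ (Set.range w) := hNle hn
        have h4 : φ n ∈ Submodule.map φ (Submodule.span ℤ (Set.range w)) := ⟨n, hn2, rfl⟩
        rw [Submodule.map_span] at h4
        have h5 : Submodule.span ℤ (φ '' Set.range w)
            ≤ (Submodule.span Γ (gens c v)).restrictScalars ℤ := by
          rw [Submodule.span_le]
          rintro y ⟨u, ⟨i, rfl⟩, rfl⟩
          -- φ (w i) = algebraMap (out i) - algebraMap (out i - w i)
          have h6 : φ (w i) = algebraMap (𝓞 L) L ((v i).out : 𝓞 L)
              - algebraMap (𝓞 L) L (((v i).out : 𝓞 L) - w i) := by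
            rw [← map_sub, sub_sub_cancel]
            rfl
          show φ (w i) ∈ Submodule.span Γ (gens c v)
          rw [h6]
          refine Submodule.sub_mem _ ?_ ?_
          · exact Submodule.subset_span (Or.inr ⟨i, rfl⟩)
          · -- image of f * rep c lands in the span of the first part
            have h7 : (((v i).out : 𝓞 L) - w i) ∈ Submodule.span ℤ (T c : Set (𝓞 L)) := by
              rw [hT c]; exact hδ i
            have h8 : algebraMap (𝓞 L) L (((v i).out : 𝓞 L) - w i)
                ∈ Submodule.map φ (Submodule.span ℤ (T c : Set (𝓞 L))) := ⟨_, h7, rfl⟩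
            rw [Submodule.map_span] at h8
            refine intSpan_le _ (Submodule.span_mono ?_ h8)
            intro y hy
            exact Or.inl hy
        exact h5 h4
    -- conclude
    refine ⟨⟨c, v⟩, ?_⟩
    have e1 : G ⟨c, v⟩ = Quot.mk (FracIdealRel L Γ) ⟨I₂, hI₂ne, hI₂fg⟩ :=
      congrArg (Quot.mk (FracIdealRel L Γ)) (Subtype.ext hspan2)
    have r1 : FracIdealRel L Γ ⟨I₀, hI₀ne, hI₀fg⟩ ⟨I₁, hI₁ne, hI₁fg⟩ :=
      rel_mulL_map x₁ hx₁ _ _ hI₁def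
    have r2 : FracIdealRel L Γ ⟨I₁, hI₁ne, hI₁fg⟩ ⟨I₂, hI₂ne, hI₂fg⟩ :=
      rel_mulL_map x hx0 _ _ hI₂def
    rw [e1, ← hq]
    exact ((Quot.sound r1).trans (Quot.sound r2)).symm
  -- cardinality computation
  have hNf : Nat.card (𝓞 L ⧸ f) = Ideal.absNorm f := by
    rw [Ideal.absNorm_apply, Submodule.cardQuot_apply]
  have hNf0 : Ideal.absNorm f ≠ 0 := by
    rw [Ne, Ideal.absNorm_eq_zero_iff]; exact hfne
  have hQcard : ∀ cc, Nat.card (Q cc) = Ideal.absNorm f := by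
    intro cc
    have hle : (f * (rep cc : Ideal (𝓞 L))).toAddSubgroup
        ≤ (rep cc : Ideal (𝓞 L)).toAddSubgroup := fun y hy => Ideal.mul_le_right (I := f) (J := (rep cc : Ideal (𝓞 L))) hy
    have h1 := AddSubgroup.relIndex_mul_index hle
    have h2 : ((rep cc : Ideal (𝓞 L)).toAddSubgroup).index
        = Ideal.absNorm (rep cc : Ideal (𝓞 L)) := by
      rw [Ideal.absNorm_apply, Submodule.cardQuot_apply]; rfl
    have h3 : ((f * (rep cc : Ideal (𝓞 L))).toAddSubgroup).index
        = Ideal.absNorm f * Ideal.absNorm (rep cc : Ideal (𝓞 L)) := by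
      rw [Ideal.absNorm_apply, Ideal.absNorm_apply, ← _root_.cardQuot_mul,
        Submodule.cardQuot_apply]
      rfl
    have h4 : Ideal.absNorm (rep cc : Ideal (𝓞 L)) ≠ 0 := by
      rw [Ne, Ideal.absNorm_eq_zero_iff]
      simpa using nonZeroDivisors.coe_ne_zero (rep cc)
    have h5 : Nat.card (Q cc) = ((f * (rep cc : Ideal (𝓞 L))).toAddSubgroup).relIndex
        ((rep cc : Ideal (𝓞 L)).toAddSubgroup) := rfl
    rw [h2, h3] at h1
    rw [h5]
    exact Nat.eq_of_mul_eq_mul_right (Nat.pos_of_ne_zero h4) h1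
  have hQfin : ∀ cc, Finite (Q cc) := fun cc =>
    Nat.finite_of_card_ne_zero (by rw [hQcard cc]; exact hNf0)
  haveI := hQfin
  haveI : Finite (Σ cc : ClassGroup (𝓞 L), (Fin g → Q cc)) := by infer_instance
  have hle := Nat.card_le_card_of_surjective G hsurj
  have hD : Nat.card (Σ cc : ClassGroup (𝓞 L), (Fin g → Q cc))
      = Nat.card (𝓞 L ⧸ f) ^ g * Nat.card (ClassGroup (𝓞 L)) := by
    letI : Fintype (ClassGroup (𝓞 L)) := Fintype.ofFinite _
    letI : ∀ cc : ClassGroup (𝓞 L), Fintype (Q cc) := fun cc => Fintype.ofFinite _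
    rw [Nat.card_eq_fintype_card, Fintype.card_sigma]
    have hfib : ∀ cc : ClassGroup (𝓞 L),
        Fintype.card (Fin g → Q cc) = Nat.card (𝓞 L ⧸ f) ^ g := by
      intro cc
      rw [← Nat.card_eq_fintype_card, Nat.card_fun, hQcard cc, hNf]
      simp
    simp_rw [hfib]
    rw [Finset.sum_const, Finset.card_univ, smul_eq_mul, ← Nat.card_eq_fintype_card, mul_comm]
  rw [hD] at hle
  refine hle.trans ?_
  have hN1 : 1 ≤ Nat.card (𝓞 L ⧸ f) := Nat.one_le_iff_ne_zero.mpr (by rw [hNf]; exact hNf0)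
  exact Nat.mul_le_mul_right _ (Nat.pow_le_pow_right hN1 (Nat.le_succ g))
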